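/- For every w ≥ 0, the point x†(w) defined by x†_i(w) = (μ_1K_1/γ_1)(γ_i/μ_i)(w/w*) for all i when w ≤ w*, and by x†_1(w) = K_1 + (w - w*)/τ_1, x†_i(w) = (μ_1K_1/γ_1)(γ_i/μ_i) for i ≥ 2 when w > w*, is the unique point in the intersection of the invariant manifold 𝓘 with the workload hyperplane { x : β^T(I-P^T)^{-1} x = w }. -/

import Mathlib

open Matrix Finset

noncomputable section

variable {J : ℕ}

/-- `x*`: the invariant point whose bottleneck coordinate is `K_0`. -/
def xstar (γ μ K : Fin (J + 1) → ℝ) : Fin (J + 1) → ℝ :=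
  fun i => (γ i / μ i) * (μ 0 / γ 0) * K 0

/-- The critical workload level `w* = βᵀ (I - Pᵀ)⁻¹ x*`. -/
def wstar (P : Matrix (Fin (J + 1)) (Fin (J + 1)) ℝ) (γ μ K : Fin (J + 1) → ℝ) : ℝ :=
  (fun i => (μ i)⁻¹) ⬝ᵥ (1 - Pᵀ)⁻¹.mulVec (xstar γ μ K)

/-- `τ_1 = βᵀ (I - Pᵀ)⁻¹ e_1`, the mean remaining total service of a bottleneck job. -/
def tau1 (P : Matrix (Fin (J + 1)) (Fin (J + 1)) ℝ) (μ : Fin (J + 1) → ℝ) : ℝ :=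
  (fun i => (μ i)⁻¹) ⬝ᵥ (1 - Pᵀ)⁻¹.mulVec (Pi.single 0 1)

/-- The invariant point `x†(w)` at workload level `w`. -/
def xdag (P : Matrix (Fin (J + 1)) (Fin (J + 1)) ℝ) (γ μ K : Fin (J + 1) → ℝ)
    (w : ℝ) : Fin (J + 1) → ℝ :=
  if w ≤ wstar P γ μ K then
    fun i => (μ 0 * K 0 / γ 0) * (γ i / μ i) * (w / wstar P γ μ K)
  else
    fun i => if i = 0 then K 0 + (w - wstar P γ μ K) / tau1 P μ
             else (μ 0 * K 0 / γ 0) * (γ i / μ i)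

lemma workload_combo (P : Matrix (Fin (J + 1)) (Fin (J + 1)) ℝ) (μ : Fin (J+1) → ℝ)
    (a b : ℝ) (x y : Fin (J+1) → ℝ) :
    (fun i => (μ i)⁻¹) ⬝ᵥ (1 - Pᵀ)⁻¹.mulVec (a • x + b • y)
      = a * ((fun i => (μ i)⁻¹) ⬝ᵥ (1 - Pᵀ)⁻¹.mulVec x)
      + b * ((fun i => (μ i)⁻¹) ⬝ᵥ (1 - Pᵀ)⁻¹.mulVec y) := by
  simp [Matrix.mulVec_add, Matrix.mulVec_smul, dotProduct_add, dotProduct_smul, smul_eq_mul]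

lemma diag_ge_one (P : Matrix (Fin (J+1)) (Fin (J+1)) ℝ)
    (hP : ∀ i j, 0 ≤ P i j) (hinv : IsUnit (1 - Pᵀ))
    (hA : ∀ i j, 0 ≤ (1 - Pᵀ)⁻¹ i j) (i : Fin (J+1)) :
    1 ≤ (1 - Pᵀ)⁻¹ i i := by
  have hdet : IsUnit (1 - Pᵀ).det := (Matrix.isUnit_iff_isUnit_det _).mp hinv
  have h : (1 - Pᵀ)⁻¹ * (1 - Pᵀ) = 1 := Matrix.nonsing_inv_mul _ hdet
  have h1 : ((1 - Pᵀ)⁻¹ * (1 - Pᵀ)) i i = 1 := by rw [h]; simp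
  rw [Matrix.mul_apply] at h1
  have hsplit : ∀ j, (1 - Pᵀ) j i = (if j = i then (1:ℝ) else 0) - P i j := by
    intro j
    simp [Matrix.sub_apply, Matrix.one_apply, Matrix.transpose_apply]
  simp only [hsplit, mul_sub, Finset.sum_sub_distrib, mul_ite, mul_one, mul_zero] at h1
  rw [Finset.sum_ite_eq' univ i (fun j => (1 - Pᵀ)⁻¹ i j)] at h1
  simp at h1
  have hS : 0 ≤ ∑ j, (1 - Pᵀ)⁻¹ i j * P i j :=
    Finset.sum_nonneg fun j _ => mul_nonneg (hA i j) (hP i j)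
  linarith

lemma tau1_pos (P : Matrix (Fin (J+1)) (Fin (J+1)) ℝ) (μ : Fin (J+1) → ℝ)
    (hμ : ∀ i, 0 < μ i) (hP : ∀ i j, 0 ≤ P i j) (hinv : IsUnit (1 - Pᵀ))
    (hA : ∀ i j, 0 ≤ (1 - Pᵀ)⁻¹ i j) : 0 < tau1 P μ := by
  have h : tau1 P μ = ∑ i, (μ i)⁻¹ * (1 - Pᵀ)⁻¹ i 0 := by
    simp [tau1, dotProduct, Matrix.mulVec_single]
  rw [h]
  apply Finset.sum_pos' (fun i _ => mul_nonneg (inv_nonneg.2 (hμ i).le) (hA i 0))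
  refine ⟨0, Finset.mem_univ _, ?_⟩
  have h1 := diag_ge_one P hP hinv hA 0
  have := hμ 0
  positivity

lemma wstar_pos (P : Matrix (Fin (J+1)) (Fin (J+1)) ℝ) (γ μ K : Fin (J+1) → ℝ)
    (hγ : ∀ i, 0 < γ i) (hμ : ∀ i, 0 < μ i) (hK : ∀ i, 0 < K i)
    (hP : ∀ i j, 0 ≤ P i j) (hinv : IsUnit (1 - Pᵀ))
    (hA : ∀ i j, 0 ≤ (1 - Pᵀ)⁻¹ i j) : 0 < wstar P γ μ K := by
  have hx : ∀ i, 0 < xstar γ μ K i := by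
    intro i; have := hγ i; have := hμ i; have := hγ 0; have := hμ 0; have := hK 0
    unfold xstar; positivity
  have hmv : ∀ i, 0 ≤ (1 - Pᵀ)⁻¹.mulVec (xstar γ μ K) i := by
    intro i
    rw [Matrix.mulVec, dotProduct]
    exact Finset.sum_nonneg fun j _ => mul_nonneg (hA i j) (hx j).le
  have hmv0 : 0 < (1 - Pᵀ)⁻¹.mulVec (xstar γ μ K) 0 := by
    rw [Matrix.mulVec, dotProduct]
    have hle : (1 - Pᵀ)⁻¹ 0 0 * xstar γ μ K 0 ≤ ∑ j, (1 - Pᵀ)⁻¹ 0 j * xstar γ μ K j :=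
      Finset.single_le_sum (fun j _ => mul_nonneg (hA 0 j) (hx j).le) (Finset.mem_univ 0)
    have h1 := diag_ge_one P hP hinv hA 0
    have h2 : 0 < (1 - Pᵀ)⁻¹ 0 0 * xstar γ μ K 0 := by
      have := hx 0; nlinarith
    exact lt_of_lt_of_le h2 hle
  unfold wstar dotProduct
  apply Finset.sum_pos' (fun i _ => mul_nonneg (inv_nonneg.2 (hμ i).le) (hmv i))
  exact ⟨0, Finset.mem_univ _, mul_pos (inv_pos.2 (hμ 0)) hmv0⟩

lemma manifold_decomp (γ μ K : Fin (J+1) → ℝ)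
    (hγ : ∀ i, 0 < γ i) (hμ : ∀ i, 0 < μ i) (hK0 : K 0 ≠ 0)
    (y : Fin (J+1) → ℝ)
    (hy : ∀ i, i ≠ 0 → μ i * y i / γ i = μ 0 * min (y 0) (K 0) / γ 0) :
    y = (min (y 0) (K 0) / K 0) • xstar γ μ K
        + (y 0 - min (y 0) (K 0)) • (Pi.single 0 1 : Fin (J+1) → ℝ) := by
  funext i
  by_cases hi : i = 0
  · subst hi
    have hγ0 := (hγ 0).ne'
    have hμ0 := (hμ 0).ne'
    simp only [Pi.add_apply, Pi.smul_apply, Pi.single_eq_same, smul_eq_mul, xstar]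
    field_simp
    ring
  · have h := hy i hi
    have hγ0 := (hγ 0).ne'
    have hμi := (hμ i).ne'
    have hγi := (hγ i).ne'
    simp only [Pi.add_apply, Pi.smul_apply, Pi.single_apply, hi, if_false, smul_eq_mul,
      mul_zero, add_zero, xstar]
    field_simp at h ⊢
    linear_combination h

/-- For every `w ≥ 0`, `x†(w)` is the unique point in the intersection of the invariant
manifold with the workload hyperplane `{ x : βᵀ (I - Pᵀ)⁻¹ x = w }`. -/
theorem xdag_unique_invariant_point_on_hyperplane
    (P : Matrix (Fin (J + 1)) (Fin (J + 1)) ℝ)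
    (hP_nonneg : ∀ i j, 0 ≤ P i j) (hP_sub : ∀ i, ∑ j, P i j ≤ 1)
    (hinv : IsUnit (1 - Pᵀ)) (hA_nonneg : ∀ i j, 0 ≤ (1 - Pᵀ)⁻¹ i j)
    (γ μ K : Fin (J + 1) → ℝ)
    (hγ : ∀ i, 0 < γ i) (hμ : ∀ i, 0 < μ i) (hK : ∀ i, 0 < K i)
    (hcrit : ∑ i, γ i / μ i = 1)
    (hbot : ∀ j, j ≠ 0 → μ 0 * K 0 / γ 0 < μ j * K j / γ j)
    (w : ℝ) (hw : 0 ≤ w) :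
    ((∀ i, 0 ≤ xdag P γ μ K w i) ∧
      (∀ i, i ≠ 0 → μ i * xdag P γ μ K w i / γ i
          = μ 0 * min (xdag P γ μ K w 0) (K 0) / γ 0) ∧
      (fun i => (μ i)⁻¹) ⬝ᵥ (1 - Pᵀ)⁻¹.mulVec (xdag P γ μ K w) = w) ∧
    ∀ y : Fin (J + 1) → ℝ, (∀ i, 0 ≤ y i) →
      (∀ i, i ≠ 0 → μ i * y i / γ i = μ 0 * min (y 0) (K 0) / γ 0) →
      (fun i => (μ i)⁻¹) ⬝ᵥ (1 - Pᵀ)⁻¹.mulVec y = w →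
      y = xdag P γ μ K w := by
  have hW : 0 < wstar P γ μ K := wstar_pos P γ μ K hγ hμ hK hP_nonneg hinv hA_nonneg
  have hT : 0 < tau1 P μ := tau1_pos P μ hμ hP_nonneg hinv hA_nonneg
  have hK0 : (0:ℝ) < K 0 := hK 0
  have hγ0 := (hγ 0).ne'
  have hμ0 := (hμ 0).ne'
  by_cases hle : w ≤ wstar P γ μ K
  · -- subcritical case
    have hxd : xdag P γ μ K w = (w / wstar P γ μ K) • xstar γ μ K := by
      funext i
      simp only [xdag, if_pos hle, Pi.smul_apply, smul_eq_mul, xstar]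
      ring
    have hx0 : xdag P γ μ K w 0 = K 0 * (w / wstar P γ μ K) := by
      rw [hxd]
      simp only [Pi.smul_apply, smul_eq_mul, xstar]
      field_simp
    have hmin : min (xdag P γ μ K w 0) (K 0) = xdag P γ μ K w 0 := by
      apply min_eq_left
      rw [hx0]
      have h1 : w / wstar P γ μ K ≤ 1 := (div_le_one hW).2 hle
      nlinarith
    refine ⟨⟨?_, ?_, ?_⟩, ?_⟩
    · intro i
      rw [hxd]
      simp only [Pi.smul_apply, smul_eq_mul, xstar]
      have h1 := hγ i; have h2 := hμ i
      have h3 := hγ 0; have h4 := hμ 0; have h5 := hK 0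
      positivity
    · intro i hi
      rw [hmin, hx0, hxd]
      simp only [Pi.smul_apply, smul_eq_mul, xstar]
      have h1 := (hμ i).ne'; have h2 := (hγ i).ne'
      field_simp
    · rw [hxd]
      have h := workload_combo P μ (w / wstar P γ μ K) 0 (xstar γ μ K) 0
      simp only [zero_smul, add_zero, zero_mul] at h
      rw [h]
      show (w / wstar P γ μ K) * wstar P γ μ K = w
      field_simp
    · intro y hy0 hyman hyw
      have hdec := manifold_decomp γ μ K hγ hμ hK0.ne' y hyman
      rw [hdec, workload_combo] at hyw
      have hfy : (min (y 0) (K 0) / K 0) * wstar P γ μ K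
          + (y 0 - min (y 0) (K 0)) * tau1 P μ = w := hyw
      have hy0K : y 0 ≤ K 0 := by
        by_contra hc
        push_neg at hc
        rw [min_eq_right hc.le, div_self hK0.ne', one_mul] at hfy
        nlinarith [mul_pos (sub_pos.2 hc) hT]
      rw [min_eq_left hy0K] at hfy hdec
      rw [sub_self, zero_mul, add_zero] at hfy
      have hratio : y 0 / K 0 = w / wstar P γ μ K := by
        rw [← hfy]
        field_simp
      rw [hdec, hxd, sub_self, zero_smul, add_zero, hratio]
  · -- supercritical case
    push_neg at hle
    have hxd : xdag P γ μ K w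
        = xstar γ μ K + ((w - wstar P γ μ K) / tau1 P μ) • (Pi.single 0 1 : Fin (J+1) → ℝ) := by
      funext i
      simp only [xdag, if_neg (not_le.2 hle), Pi.add_apply, Pi.smul_apply,
        Pi.single_apply, smul_eq_mul, xstar]
      by_cases hi : i = 0
      · simp only [hi, if_true, if_pos]
        field_simp
      · simp only [hi, if_false, mul_zero, add_zero]
        ring
    have hrpos : 0 ≤ (w - wstar P γ μ K) / tau1 P μ :=
      div_nonneg (sub_nonneg.2 hle.le) hT.le
    have hx0 : xdag P γ μ K w 0 = K 0 + (w - wstar P γ μ K) / tau1 P μ := by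
      simp only [xdag, if_neg (not_le.2 hle)]
      simp
    have hmin : min (xdag P γ μ K w 0) (K 0) = K 0 := by
      apply min_eq_right
      rw [hx0]
      linarith
    refine ⟨⟨?_, ?_, ?_⟩, ?_⟩
    · intro i
      simp only [xdag, if_neg (not_le.2 hle)]
      by_cases hi : i = 0
      · rw [if_pos hi]
        linarith
      · rw [if_neg hi]
        have h1 := hγ i; have h2 := hμ i
        have h3 := hγ 0; have h4 := hμ 0; have h5 := hK 0
        positivity
    · intro i hi
      rw [hmin]
      simp only [xdag, if_neg (not_le.2 hle), if_neg hi]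
      have h1 := (hμ i).ne'; have h2 := (hγ i).ne'
      field_simp
    · rw [hxd]
      have h := workload_combo P μ 1 ((w - wstar P γ μ K) / tau1 P μ)
        (xstar γ μ K) (Pi.single 0 1)
      rw [one_smul] at h
      rw [h]
      show 1 * wstar P γ μ K + (w - wstar P γ μ K) / tau1 P μ * tau1 P μ = w
      field_simp
      ring
    · intro y hy0 hyman hyw
      have hdec := manifold_decomp γ μ K hγ hμ hK0.ne' y hyman
      rw [hdec, workload_combo] at hyw
      have hfy : (min (y 0) (K 0) / K 0) * wstar P γ μ K
          + (y 0 - min (y 0) (K 0)) * tau1 P μ = w := hyw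
      have hy0K : K 0 < y 0 := by
        by_contra hc
        push_neg at hc
        rw [min_eq_left hc, sub_self, zero_mul, add_zero] at hfy
        have h1 : y 0 / K 0 ≤ 1 := (div_le_one hK0).2 hc
        nlinarith
      rw [min_eq_right hy0K.le] at hfy hdec
      rw [div_self hK0.ne'] at hfy hdec
      rw [one_mul] at hfy
      have hr : y 0 - K 0 = (w - wstar P γ μ K) / tau1 P μ := by
        rw [eq_div_iff hT.ne']
        linarith
      rw [hdec, hxd, hr, one_smul]

end
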